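/- For every continuous strictly increasing function p : [0,1] → [0,1] and all parameters r > 1, y ∈ [0,1], β ∈ [0,1], and 0 ≤ f < t ≤ 1, there exists a non-Bayesian endogenous equilibrium, i.e., a tuple (x_n^C, x_n^R, x_v^C, x_v^R, x_v^T) together with P ∈ [0,1] satisfying all the equilibrium conditions. -/

import Mathlib

open Set

/-- Recklessness threshold for signaled V2V drivers. -/
noncomputable def Pvs (r f t : ℝ) : ℝ := f / (r * t + f)

/-- Recklessness threshold for non-V2V drivers. -/
noncomputable def Pn (r : ℝ) : ℝ := 1 / (1 + r)

/-- Recklessness threshold for unsignaled V2V drivers. -/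
noncomputable def Pvu (r β f t : ℝ) : ℝ := (1 - β * f) / (1 + r * (1 - β * t) - β * f)

/-- Probability `σ(P)` that a warning signal is displayed when the accident probability is `P`. -/
noncomputable def sig (β f t P : ℝ) : ℝ := β * (P * t + (1 - P) * f)

/-- A Bayesian equilibrium with accident probability `P`:
`xnC, xnR` are the masses of careful/reckless non-V2V drivers, `cu, ρu` the fractions of the
unsignaled V2V population (of mass `(1-σ(P))·y`) choosing Careful/Reckless, and `cs, ρs` the
fractions of the signaled V2V population (of mass `σ(P)·y`) choosing Careful/Reckless. -/
structure BayesEq (r y β f t P xnC xnR cu ρu cs ρs : ℝ) : Prop where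
  xnC_nonneg : 0 ≤ xnC
  xnR_nonneg : 0 ≤ xnR
  cu_nonneg : 0 ≤ cu
  ρu_nonneg : 0 ≤ ρu
  cs_nonneg : 0 ≤ cs
  ρs_nonneg : 0 ≤ ρs
  sum_n : xnC + xnR = 1 - y
  sum_u : cu + ρu = 1
  sum_s : cs + ρs = 1
  best_nR : 0 < xnR → r * P ≤ 1 - P
  best_nC : 0 < xnC → 1 - P ≤ r * P
  best_ρu : 0 < ρu * (1 - sig β f t P) * y → r * P * (1 - β * t) ≤ (1 - P) * (1 - β * f)
  best_cu : 0 < cu * (1 - sig β f t P) * y → (1 - P) * (1 - β * f) ≤ r * P * (1 - β * t)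
  best_ρs : 0 < ρs * sig β f t P * y → r * P * (β * t) ≤ (1 - P) * (β * f)
  best_cs : 0 < cs * sig β f t P * y → (1 - P) * (β * f) ≤ r * P * (β * t)

/-- Social cost of a Bayesian behavior tuple. -/
noncomputable def socialCostB (r y β f t P xnC xnR cu ρu cs ρs : ℝ) : ℝ :=
  (1 - P) * xnC + r * P * xnR +
    y * (cu * ((1 - P) * (1 - β * f)) + ρu * (r * P * (1 - β * t)) +
         cs * ((1 - P) * (β * f)) + ρs * (r * P * (β * t)))

/-- A non-Bayesian equilibrium with accident probability `P`:
`xnC, xnR` are the masses of careful/reckless non-V2V drivers, and `xvC, xvR, xvT` the masses of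
V2V drivers choosing Careful/Reckless/Trust.  The costs are `J^C = 1 - P`, `J^R = r·P` and
`J^T = (1-P)·β·f + r·P·(1-β·t)`. -/
structure NonBayesEq (r y β f t P xnC xnR xvC xvR xvT : ℝ) : Prop where
  xnC_nonneg : 0 ≤ xnC
  xnR_nonneg : 0 ≤ xnR
  xvC_nonneg : 0 ≤ xvC
  xvR_nonneg : 0 ≤ xvR
  xvT_nonneg : 0 ≤ xvT
  sum_n : xnC + xnR = 1 - y
  sum_v : xvC + xvR + xvT = y
  best_nC : 0 < xnC → 1 - P ≤ r * P
  best_nR : 0 < xnR → r * P ≤ 1 - P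
  best_vC : 0 < xvC → 1 - P ≤ min (r * P) ((1 - P) * (β * f) + r * P * (1 - β * t))
  best_vR : 0 < xvR → r * P ≤ min (1 - P) ((1 - P) * (β * f) + r * P * (1 - β * t))
  best_vT : 0 < xvT → (1 - P) * (β * f) + r * P * (1 - β * t) ≤ min (1 - P) (r * P)

/-- Social cost of a non-Bayesian behavior tuple. -/
noncomputable def socialCostI (r β f t P xnC xnR xvC xvR xvT : ℝ) : ℝ :=
  (1 - P) * (xnC + xvC) + r * P * (xnR + xvR) +
    ((1 - P) * (β * f) + r * P * (1 - β * t)) * xvT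

set_option maxHeartbeats 1000000 in
/-- existence of a non-Bayesian endogenous equilibrium. -/
theorem nonbayes_endo_equilibrium_exists (r y β f t : ℝ) (p : ℝ → ℝ)
    (hr : 1 < r) (hy : y ∈ Icc (0:ℝ) 1) (hβ : β ∈ Icc (0:ℝ) 1)
    (hf : 0 ≤ f) (hft : f < t) (ht : t ≤ 1)
    (hp_cont : ContinuousOn p (Icc (0:ℝ) 1)) (hp_mono : StrictMonoOn p (Icc (0:ℝ) 1))
    (hp_maps : MapsTo p (Icc (0:ℝ) 1) (Icc (0:ℝ) 1)) :
    ∃ P xnC xnR xvC xvR xvT : ℝ,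
      P ∈ Icc (0:ℝ) 1 ∧
      NonBayesEq r y β f t P xnC xnR xvC xvR xvT ∧
      P = p (xnR + xvR + (1 - sig β f t P) * xvT) := by
  obtain ⟨hy0, hy1⟩ := hy
  obtain ⟨hβ0, hβ1⟩ := hβ
  have ht0 : 0 < t := lt_of_le_of_lt hf hft
  have hr0 : 0 < r := by linarith
  have hr1 : (0:ℝ) < 1 + r := by linarith
  have hDq : 0 < r * t + f := by nlinarith
  have hβt : β * t ≤ 1 := by nlinarith
  have hβf : β * f ≤ f := by nlinarith
  have hD : 0 < 1 + r * (1 - β * t) - β * f := by nlinarith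
  obtain ⟨Q, hQdef⟩ : ∃ Q : ℝ, Q = f / (r * t + f) := ⟨_, rfl⟩
  obtain ⟨N, hNdef⟩ : ∃ N : ℝ, N = 1 / (1 + r) := ⟨_, rfl⟩
  obtain ⟨U, hUdef⟩ : ∃ U : ℝ, U = (1 - β * f) / (1 + r * (1 - β * t) - β * f) := ⟨_, rfl⟩
  have hQ0 : 0 ≤ Q := hQdef ▸ div_nonneg hf hDq.le
  have hQN : Q ≤ N := by
    rw [hQdef, hNdef, div_le_div_iff₀ hDq hr1]
    nlinarith [mul_nonneg hr0.le (sub_nonneg.mpr hft.le)]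
  have hNU : N ≤ U := by
    rw [hNdef, hUdef, div_le_div_iff₀ hr1 hD]
    nlinarith [mul_nonneg (mul_nonneg hr0.le hβ0) (sub_nonneg.mpr hft.le)]
  have hU1 : U ≤ 1 := by
    rw [hUdef, div_le_one hD]
    nlinarith [mul_nonneg hr0.le (by linarith : (0:ℝ) ≤ 1 - β * t)]
  have hN1 : N ≤ 1 := hNU.trans hU1
  have hQ1 : Q ≤ 1 := hQN.trans hN1
  have hN0 : 0 ≤ N := hQ0.trans hQN
  have hU0 : 0 ≤ U := hN0.trans hNU
  -- threshold characterizations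
  have key_n : ∀ P : ℝ, P ≤ N → r * P ≤ 1 - P := by
    intro P h; rw [hNdef, le_div_iff₀ hr1] at h; nlinarith
  have key_n' : ∀ P : ℝ, N ≤ P → 1 - P ≤ r * P := by
    intro P h; rw [hNdef, div_le_iff₀ hr1] at h; nlinarith
  have key_q : ∀ P : ℝ, Q ≤ P → (1 - P) * (β * f) + r * P * (1 - β * t) ≤ r * P := by
    intro P h; rw [hQdef, div_le_iff₀ hDq] at h
    nlinarith [mul_le_mul_of_nonneg_left h hβ0]
  have key_q' : ∀ P : ℝ, P ≤ Q → r * P ≤ (1 - P) * (β * f) + r * P * (1 - β * t) := by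
    intro P h; rw [hQdef, le_div_iff₀ hDq] at h
    nlinarith [mul_le_mul_of_nonneg_left h hβ0]
  have key_u : ∀ P : ℝ, P ≤ U → (1 - P) * (β * f) + r * P * (1 - β * t) ≤ 1 - P := by
    intro P h; rw [hUdef, le_div_iff₀ hD] at h; nlinarith
  have key_u' : ∀ P : ℝ, U ≤ P → 1 - P ≤ (1 - P) * (β * f) + r * P * (1 - β * t) := by
    intro P h; rw [hUdef, div_le_iff₀ hD] at h; nlinarith
  -- sigma bounds
  have hsig0 : ∀ P : ℝ, 0 ≤ P → P ≤ 1 → 0 ≤ sig β f t P := by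
    intro P h0 h1; unfold sig
    nlinarith [mul_nonneg h0 ht0.le, mul_nonneg (by linarith : (0:ℝ) ≤ 1 - P) hf,
      mul_nonneg h0 ht0.le]
  have hsig1 : ∀ P : ℝ, 0 ≤ P → P ≤ 1 → sig β f t P ≤ 1 := by
    intro P h0 h1; unfold sig
    have hS0 : (0:ℝ) ≤ P * t + (1 - P) * f := by
      nlinarith [mul_nonneg h0 ht0.le, mul_nonneg (by linarith : (0:ℝ) ≤ 1 - P) hf]
    nlinarith [mul_nonneg (by linarith : (0:ℝ) ≤ 1 - P) (sub_nonneg.mpr hft.le),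
      mul_nonneg (sub_nonneg.mpr hβ1) hS0]
  have hmem1 : ∀ P ∈ Icc (0:ℝ) 1, (1 - sig β f t P * y) ∈ Icc (0:ℝ) 1 := by
    intro P hP
    have h0 := hsig0 P hP.1 hP.2; have h1 := hsig1 P hP.1 hP.2
    constructor
    · nlinarith [mul_nonneg h0 (by linarith : (0:ℝ) ≤ 1 - y)]
    · nlinarith [mul_nonneg h0 hy0]
  have hmem2 : ∀ P ∈ Icc (0:ℝ) 1, ((1 - sig β f t P) * y) ∈ Icc (0:ℝ) 1 := by
    intro P hP
    have h0 := hsig0 P hP.1 hP.2; have h1 := hsig1 P hP.1 hP.2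
    constructor
    · exact mul_nonneg (by linarith) hy0
    · nlinarith [mul_nonneg (by linarith : (0:ℝ) ≤ 1 - sig β f t P) (by linarith : (0:ℝ) ≤ 1 - y)]
  have hc1 : Continuous fun P : ℝ => 1 - sig β f t P * y := by unfold sig; fun_prop
  have hc2 : Continuous fun P : ℝ => (1 - sig β f t P) * y := by unfold sig; fun_prop
  have hp1mem : p 1 ∈ Icc (0:ℝ) 1 := hp_maps ⟨zero_le_one, le_refl 1⟩
  have hp0mem : p 0 ∈ Icc (0:ℝ) 1 := hp_maps ⟨le_refl 0, zero_le_one⟩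
  have hQmem : Q ∈ Icc (0:ℝ) 1 := ⟨hQ0, hQ1⟩
  have hNmem : N ∈ Icc (0:ℝ) 1 := ⟨hN0, hN1⟩
  have hUmem : U ∈ Icc (0:ℝ) 1 := ⟨hU0, hU1⟩
  by_cases h1 : p 1 ≤ Q
  · -- all reckless, P = p 1
    refine ⟨p 1, 0, 1 - y, 0, y, 0, hp1mem,
      ⟨le_refl 0, by linarith, le_refl 0, hy0, le_refl 0, by ring, by ring,
        fun h => absurd h (lt_irrefl 0),
        fun _ => key_n _ (h1.trans hQN),
        fun h => absurd h (lt_irrefl 0),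
        fun _ => le_min (key_n _ (h1.trans hQN)) (key_q' _ h1),
        fun h => absurd h (lt_irrefl 0)⟩, ?_⟩
    congr 1; ring
  · push_neg at h1
    by_cases h2 : p (1 - sig β f t Q * y) ≤ Q
    · -- vertical segment at Q: mix of reckless/trust among V2V
      have hlo : (1 - sig β f t Q * y) ∈ Icc (0:ℝ) 1 := hmem1 Q hQmem
      have hsub : Icc (1 - sig β f t Q * y) 1 ⊆ Icc (0:ℝ) 1 := Icc_subset_Icc hlo.1 le_rfl
      obtain ⟨x, hx, hpx⟩ := intermediate_value_Icc hlo.2 (hp_cont.mono hsub) ⟨h2, h1.le⟩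
      have hσQ := hsig0 Q hQ0 hQ1
      have hσy : 0 < sig β f t Q * y := by
        by_contra hcon
        push_neg at hcon
        have hz : sig β f t Q * y = 0 := le_antisymm hcon (mul_nonneg hσQ hy0)
        rw [hz, sub_zero] at h2
        exact absurd h2 (not_le.mpr h1)
      have hσpos : 0 < sig β f t Q := by
        nlinarith [mul_nonneg hσQ (sub_nonneg.mpr hy1)]
      have hT0 : 0 ≤ (1 - x) / sig β f t Q := div_nonneg (by linarith [hx.2]) hσpos.le
      have hTy : (1 - x) / sig β f t Q ≤ y := by
        rw [div_le_iff₀ hσpos]; nlinarith [hx.1]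
      refine ⟨Q, 0, 1 - y, 0, y - (1 - x) / sig β f t Q, (1 - x) / sig β f t Q, hQmem,
        ⟨le_refl 0, by linarith, le_refl 0, by linarith, hT0, by ring, by ring,
          fun h => absurd h (lt_irrefl 0),
          fun _ => key_n Q hQN,
          fun h => absurd h (lt_irrefl 0),
          fun _ => le_min (key_n Q hQN) (key_q' Q le_rfl),
          fun _ => le_min (key_u Q (hQN.trans hNU)) (key_q Q le_rfl)⟩, ?_⟩
      have harg : 1 - y + (y - (1 - x) / sig β f t Q)
          + (1 - sig β f t Q) * ((1 - x) / sig β f t Q) = x := by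
        field_simp
        ring
      rw [harg]; exact hpx.symm
    · push_neg at h2
      by_cases h3 : p (1 - sig β f t N * y) ≤ N
      · -- horizontal piece B: non-V2V reckless, V2V trust, P ∈ [Q,N]
        set g : ℝ → ℝ := fun P => P - p (1 - sig β f t P * y) with hgdef
        have hsub : Icc Q N ⊆ Icc (0:ℝ) 1 := Icc_subset_Icc hQ0 hN1
        have hgc : ContinuousOn g (Icc Q N) := by
          apply ContinuousOn.sub continuousOn_id
          exact hp_cont.comp hc1.continuousOn (fun P hP => hmem1 P (hsub hP))
        have hgQ : g Q ≤ 0 := by show Q - p (1 - sig β f t Q * y) ≤ 0; linarith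
        have hgN : 0 ≤ g N := by show 0 ≤ N - p (1 - sig β f t N * y); linarith
        obtain ⟨P, hP, hgP⟩ := intermediate_value_Icc hQN hgc ⟨hgQ, hgN⟩
        have hPeq : P = p (1 - sig β f t P * y) := by
          have : P - p (1 - sig β f t P * y) = 0 := hgP
          linarith
        refine ⟨P, 0, 1 - y, 0, 0, y, hsub hP,
          ⟨le_refl 0, by linarith, le_refl 0, le_refl 0, hy0, by ring, by ring,
            fun h => absurd h (lt_irrefl 0),
            fun _ => key_n P hP.2,
            fun h => absurd h (lt_irrefl 0),
            fun h => absurd h (lt_irrefl 0),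
            fun _ => le_min (key_u P (hP.2.trans hNU)) (key_q P hP.1)⟩, ?_⟩
        rw [show 1 - y + 0 + (1 - sig β f t P) * y = 1 - sig β f t P * y from by ring]
        exact hPeq
      · push_neg at h3
        by_cases h4 : p ((1 - sig β f t N) * y) ≤ N
        · -- vertical segment at N: non-V2V mix C/R, V2V trust
          have hlo : ((1 - sig β f t N) * y) ∈ Icc (0:ℝ) 1 := hmem2 N hNmem
          have hhi : (1 - sig β f t N * y) ∈ Icc (0:ℝ) 1 := hmem1 N hNmem
          have hord : (1 - sig β f t N) * y ≤ 1 - sig β f t N * y := by nlinarith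
          have hsub : Icc ((1 - sig β f t N) * y) (1 - sig β f t N * y) ⊆ Icc (0:ℝ) 1 :=
            Icc_subset_Icc hlo.1 hhi.2
          obtain ⟨x, hx, hpx⟩ := intermediate_value_Icc hord (hp_cont.mono hsub) ⟨h4, h3.le⟩
          refine ⟨N, 1 - sig β f t N * y - x, x - (1 - sig β f t N) * y, 0, 0, y, hNmem,
            ⟨by linarith [hx.2], by linarith [hx.1], le_refl 0, le_refl 0, hy0,
              by ring, by ring,
              fun _ => key_n' N le_rfl,
              fun _ => key_n N le_rfl,
              fun h => absurd h (lt_irrefl 0),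
              fun h => absurd h (lt_irrefl 0),
              fun _ => le_min (key_u N hNU) (key_q N hQN)⟩, ?_⟩
          rw [show x - (1 - sig β f t N) * y + 0 + (1 - sig β f t N) * y = x from by ring]
          exact hpx.symm
        · push_neg at h4
          by_cases h5 : p ((1 - sig β f t U) * y) ≤ U
          · -- horizontal piece C: non-V2V careful, V2V trust, P ∈ [N,U]
            set g : ℝ → ℝ := fun P => P - p ((1 - sig β f t P) * y) with hgdef
            have hsub : Icc N U ⊆ Icc (0:ℝ) 1 := Icc_subset_Icc hN0 hU1
            have hgc : ContinuousOn g (Icc N U) := by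
              apply ContinuousOn.sub continuousOn_id
              exact hp_cont.comp hc2.continuousOn (fun P hP => hmem2 P (hsub hP))
            have hgN : g N ≤ 0 := by show N - p ((1 - sig β f t N) * y) ≤ 0; linarith
            have hgU : 0 ≤ g U := by show 0 ≤ U - p ((1 - sig β f t U) * y); linarith
            obtain ⟨P, hP, hgP⟩ := intermediate_value_Icc hNU hgc ⟨hgN, hgU⟩
            have hPeq : P = p ((1 - sig β f t P) * y) := by
              have : P - p ((1 - sig β f t P) * y) = 0 := hgP
              linarith
            refine ⟨P, 1 - y, 0, 0, 0, y, hsub hP,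
              ⟨by linarith, le_refl 0, le_refl 0, le_refl 0, hy0, by ring, by ring,
                fun _ => key_n' P hP.1,
                fun h => absurd h (lt_irrefl 0),
                fun h => absurd h (lt_irrefl 0),
                fun h => absurd h (lt_irrefl 0),
                fun _ => le_min (key_u P hP.2) (key_q P (hQN.trans hP.1))⟩, ?_⟩
            rw [show (0:ℝ) + 0 + (1 - sig β f t P) * y = (1 - sig β f t P) * y from by ring]
            exact hPeq
          · push_neg at h5
            by_cases h6 : p 0 ≤ U
            · -- vertical segment at U: V2V mix C/T
              have hhi : ((1 - sig β f t U) * y) ∈ Icc (0:ℝ) 1 := hmem2 U hUmem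
              have hsub : Icc (0:ℝ) ((1 - sig β f t U) * y) ⊆ Icc (0:ℝ) 1 :=
                Icc_subset_Icc le_rfl hhi.2
              obtain ⟨x, hx, hpx⟩ := intermediate_value_Icc hhi.1 (hp_cont.mono hsub) ⟨h6, h5.le⟩
              have hσU1 := hsig1 U hU0 hU1
              have hprodpos : 0 < (1 - sig β f t U) * y := by
                rcases lt_or_eq_of_le hhi.1 with h | h
                · exact h
                · rw [← h] at h5; exact absurd h6 (not_le.mpr h5)
              have h1σ : 0 < 1 - sig β f t U := by
                nlinarith [mul_nonneg (by linarith : (0:ℝ) ≤ 1 - sig β f t U)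
                  (sub_nonneg.mpr hy1)]
              have hT0 : 0 ≤ x / (1 - sig β f t U) := div_nonneg hx.1 h1σ.le
              have hTy : x / (1 - sig β f t U) ≤ y := by
                rw [div_le_iff₀ h1σ]; nlinarith [hx.2]
              refine ⟨U, 1 - y, 0, y - x / (1 - sig β f t U), 0, x / (1 - sig β f t U), hUmem,
                ⟨by linarith, le_refl 0, by linarith, le_refl 0, hT0, by ring, by ring,
                  fun _ => key_n' U hNU,
                  fun h => absurd h (lt_irrefl 0),
                  fun _ => le_min (key_n' U hNU) (key_u' U le_rfl),
                  fun h => absurd h (lt_irrefl 0),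
                  fun _ => le_min (key_u U le_rfl) (key_q U (hQN.trans hNU))⟩, ?_⟩
              have harg : (0:ℝ) + 0 + (1 - sig β f t U) * (x / (1 - sig β f t U)) = x := by
                field_simp
                ring
              rw [harg]; exact hpx.symm
            · push_neg at h6
              -- all careful, P = p 0
              refine ⟨p 0, 1 - y, 0, y, 0, 0, hp0mem,
                ⟨by linarith, le_refl 0, hy0, le_refl 0, le_refl 0, by ring, by ring,
                  fun _ => key_n' _ (hNU.trans h6.le),
                  fun h => absurd h (lt_irrefl 0),
                  fun _ => le_min (key_n' _ (hNU.trans h6.le)) (key_u' _ h6.le),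
                  fun h => absurd h (lt_irrefl 0),
                  fun h => absurd h (lt_irrefl 0)⟩, ?_⟩
              congr 1; ring
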